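/- If a semicubical set X is the union of semicubical subsets X₁ and X₂, then for each ε ∈ {0,1} there is a long exact sequence ⋯ → H_n^ε(X₁ ∩ X₂) → H_n^ε(X₁) ⊕ H_n^ε(X₂) → H_n^ε(X) → H_{n-1}^ε(X₁ ∩ X₂) → ⋯ of Goubault homology groups. -/

import Mathlib

/-- A semicubical set: sets `X n` with boundary maps `∂_i^{n,ε}`.
`face n i ε : X (n+1) → X n` encodes `∂_{i+1}^{n+1,ε}` (so `i : Fin (n+1)` ranges over `1,…,n+1`). -/
structure SCSet : Type 1 where
  X : ℕ → Type
  face : ∀ n, Fin (n + 1) → Bool → X (n + 1) → X n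
  comm : ∀ n (α β : Bool) (i : Fin (n + 1)) (j : Fin (n + 2)), (i : ℕ) < (j : ℕ) →
    ∀ x, face n i α (face (n + 1) j β x) =
      face n ⟨(j : ℕ) - 1, by have := j.isLt; omega⟩ β (face (n + 1) i.castSucc α x)

/-- Chain group: free abelian group on the `n`-cubes. -/
abbrev SCSet.C (Xs : SCSet) (n : ℕ) : Type := Xs.X n →₀ ℤ

/-- The differential `d σ = Σ_{i=1}^{n+1} (-1)^i (∂_i^1 σ - ∂_i^0 σ)`. -/
noncomputable def SCSet.d (Xs : SCSet) (n : ℕ) : Xs.C (n + 1) →+ Xs.C n :=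
  Finsupp.liftAddHom fun σ => zmultiplesHom _
    (∑ i : Fin (n + 1), ((-1 : ℤ) ^ ((i : ℕ) + 1)) •
      (Finsupp.single (Xs.face n i true σ) (1 : ℤ) -
       Finsupp.single (Xs.face n i false σ) (1 : ℤ)))

/-- The outgoing differential at level `n` (zero map when `n = 0`). -/
noncomputable def SCSet.dOut (Xs : SCSet) : ∀ n, Xs.C n →+ Xs.C (n - 1)
  | 0 => 0
  | n + 1 => Xs.d n

/-- Homology of the semicubical set. -/
noncomputable def SCSet.H (Xs : SCSet) (n : ℕ) : Type :=
  (Xs.dOut n).ker ⧸ ((Xs.d n).range.addSubgroupOf (Xs.dOut n).ker)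

noncomputable instance (Xs : SCSet) (n : ℕ) : AddCommGroup (Xs.H n) :=
  QuotientAddGroup.Quotient.addCommGroup _

/-- The directed (Goubault) differential `d^ε σ = Σ_i (-1)^i ∂_i^ε σ`. -/
noncomputable def SCSet.dE (Xs : SCSet) (ε : Bool) (n : ℕ) : Xs.C (n + 1) →+ Xs.C n :=
  Finsupp.liftAddHom fun σ => zmultiplesHom _
    (∑ i : Fin (n + 1), ((-1 : ℤ) ^ ((i : ℕ) + 1)) •
      Finsupp.single (Xs.face n i ε σ) (1 : ℤ))

noncomputable def SCSet.dEOut (Xs : SCSet) (ε : Bool) : ∀ n, Xs.C n →+ Xs.C (n - 1)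
  | 0 => 0
  | n + 1 => Xs.dE ε n

/-- Goubault (directed) homology of the semicubical set. -/
noncomputable def SCSet.HE (Xs : SCSet) (ε : Bool) (n : ℕ) : Type :=
  (Xs.dEOut ε n).ker ⧸ ((Xs.dE ε n).range.addSubgroupOf (Xs.dEOut ε n).ker)

noncomputable instance (Xs : SCSet) (ε : Bool) (n : ℕ) : AddCommGroup (Xs.HE ε n) :=
  QuotientAddGroup.Quotient.addCommGroup _

/-- A semicubical subset of a semicubical set: a degreewise family of subsets closed under
the boundary maps. -/
structure SCSub (Xs : SCSet) where
  mem : ∀ n, Set (Xs.X n)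
  closed : ∀ n (i : Fin (n + 1)) (ε : Bool) (x : Xs.X (n + 1)),
    x ∈ mem (n + 1) → Xs.face n i ε x ∈ mem n

/-- The semicubical set carried by a semicubical subset. -/
def SCSub.toSCSet {Xs : SCSet} (A : SCSub Xs) : SCSet where
  X n := A.mem n
  face n i ε x := ⟨Xs.face n i ε x.1, A.closed n i ε x.1 x.2⟩
  comm := by
    intro n α β i j h x
    exact Subtype.ext (Xs.comm n α β i j h x.1)

/-- Degreewise intersection of semicubical subsets. -/
def SCSub.inter {Xs : SCSet} (A B : SCSub Xs) : SCSub Xs where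
  mem n := A.mem n ∩ B.mem n
  closed n i ε x hx := ⟨A.closed n i ε x hx.1, B.closed n i ε x hx.2⟩

/-- Inclusion of chains of a semicubical subset into chains of the ambient semicubical set. -/
noncomputable def SCSub.incl {Xs : SCSet} (A : SCSub Xs) (n : ℕ) :
    A.toSCSet.C n →+ Xs.C n :=
  Finsupp.mapDomain.addMonoidHom Subtype.val

/-- Inclusion of chains of the intersection into chains of the first subset. -/
noncomputable def SCSub.interInclLeft {Xs : SCSet} (A B : SCSub Xs) (n : ℕ) :
    (A.inter B).toSCSet.C n →+ A.toSCSet.C n :=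
  Finsupp.mapDomain.addMonoidHom fun x => ⟨x.1, x.2.1⟩

/-- Inclusion of chains of the intersection into chains of the second subset. -/
noncomputable def SCSub.interInclRight {Xs : SCSet} (A B : SCSub Xs) (n : ℕ) :
    (A.inter B).toSCSet.C n →+ B.toSCSet.C n :=
  Finsupp.mapDomain.addMonoidHom fun x => ⟨x.1, x.2.2⟩

/-- The map `θ : C(X₁ ∩ X₂) → C(X₁) ⊕ C(X₂)`, `σ ↦ σ ⊕ σ`. -/
noncomputable def SCSub.theta {Xs : SCSet} (A B : SCSub Xs) (n : ℕ) :
    (A.inter B).toSCSet.C n →+ A.toSCSet.C n × B.toSCSet.C n :=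
  (A.interInclLeft B n).prod (A.interInclRight B n)

/-- The map `C(X₁) ⊕ C(X₂) → C(X)`, `σ₁ ⊕ σ₂ ↦ σ₁ - σ₂`. -/
noncomputable def SCSub.subMap {Xs : SCSet} (A B : SCSub Xs) (n : ℕ) :
    A.toSCSet.C n × B.toSCSet.C n →+ Xs.C n :=
  (A.incl n).coprod (-(B.incl n))


lemma SCSet.dE_single (Xs : SCSet) (ε : Bool) (n : ℕ) (σ : Xs.X (n + 1)) (k : ℤ) :
    Xs.dE ε n (Finsupp.single σ k) =
      k • ∑ i : Fin (n + 1), ((-1 : ℤ) ^ ((i : ℕ) + 1)) •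
        Finsupp.single (Xs.face n i ε σ) (1 : ℤ) := by
  rw [SCSet.dE, Finsupp.liftAddHom_apply_single, zmultiplesHom_apply]

lemma SCSet.key (Xs : SCSet) (ε : Bool) (n : ℕ) (σ : Xs.X (n + 1 + 1)) :
    ∑ p : Fin (n + 1 + 1) × Fin (n + 1),
      (((-1 : ℤ) ^ ((p.1 : ℕ) + 1)) * ((-1 : ℤ) ^ ((p.2 : ℕ) + 1))) •
        Finsupp.single (Xs.face n p.2 ε (Xs.face (n+1) p.1 ε σ)) (1 : ℤ) = 0 := by
  set T : Fin (n+2) × Fin (n+1) → Xs.C n := fun p =>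
    (((-1 : ℤ) ^ ((p.1 : ℕ) + 1)) * ((-1 : ℤ) ^ ((p.2 : ℕ) + 1))) •
      Finsupp.single (Xs.face n p.2 ε (Xs.face (n+1) p.1 ε σ)) (1 : ℤ) with hT
  show ∑ p : Fin (n+2) × Fin (n+1), T p = 0
  refine Finset.sum_involution
    (fun p _ => if h : (p.2 : ℕ) < (p.1 : ℕ) then
        (⟨(p.2 : ℕ), by omega⟩, ⟨(p.1 : ℕ) - 1, by have := p.1.isLt; omega⟩)
      else (⟨(p.2 : ℕ) + 1, by have := p.2.isLt; omega⟩, ⟨(p.1 : ℕ), by have := p.2.isLt; omega⟩))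
    (fun p _ => ?_) (fun p _ _ => ?_) (fun p _ => Finset.mem_univ _) (fun p _ => ?_)
  · -- cancellation
    by_cases h : (p.2 : ℕ) < (p.1 : ℕ)
    · simp only [dif_pos h, hT]
      have hcomm := Xs.comm n ε ε p.2 p.1 h σ
      have hc : (⟨(p.2 : ℕ), by omega⟩ : Fin (n+2)) = p.2.castSucc := rfl
      rw [hcomm, hc]
      have hj : (p.1 : ℕ) - 1 + 1 = (p.1 : ℕ) := by omega
      rw [← add_smul]
      convert zero_smul ℤ _
      push_cast
      rw [hj]
      ring
    · simp only [dif_neg h, hT]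
      have hlt : ((⟨(p.1 : ℕ), by have := p.2.isLt; omega⟩ : Fin (n+1)) : ℕ) <
          ((⟨(p.2 : ℕ) + 1, by have := p.2.isLt; omega⟩ : Fin (n+2)) : ℕ) := by
        simp only [Fin.val_mk]; omega
      have hcomm := Xs.comm n ε ε ⟨(p.1 : ℕ), by have := p.2.isLt; omega⟩
        ⟨(p.2 : ℕ) + 1, by have := p.2.isLt; omega⟩ hlt σ
      have h1 : (⟨(p.2 : ℕ) + 1 - 1, by have := p.2.isLt; omega⟩ : Fin (n+1)) = p.2 := by
        apply Fin.ext; simp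
      have h2 : (Fin.castSucc (⟨(p.1 : ℕ), by have := p.2.isLt; omega⟩ : Fin (n+1))) = p.1 := by
        apply Fin.ext; simp
      rw [h1, h2] at hcomm
      rw [hcomm, ← add_smul]
      convert zero_smul ℤ _
      push_cast
      ring
  · -- g p ≠ p
    intro hne
    by_cases h : (p.2 : ℕ) < (p.1 : ℕ)
    · simp only [dif_pos h] at hne
      have := congrArg (fun q : Fin (n+2) × Fin (n+1) => (q.1 : ℕ)) hne
      simp at this; omega
    · simp only [dif_neg h] at hne
      have := congrArg (fun q : Fin (n+2) × Fin (n+1) => (q.1 : ℕ)) hne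
      simp at this; omega
  · -- involution
    by_cases h : (p.2 : ℕ) < (p.1 : ℕ)
    · simp only [dif_pos h]
      rw [dif_neg (show ¬((p.1 : ℕ) - 1 < (p.2 : ℕ)) by omega)]
      refine Prod.ext (Fin.ext ?_) (Fin.ext ?_) <;> simp <;> omega
    · simp only [dif_neg h]
      rw [dif_pos (show (p.1 : ℕ) < (p.2 : ℕ) + 1 by omega)]
      refine Prod.ext (Fin.ext ?_) (Fin.ext ?_) <;> simp <;> omega

lemma SCSet.dE_comp (Xs : SCSet) (ε : Bool) (n : ℕ) :
    (Xs.dE ε n).comp (Xs.dE ε (n + 1)) = 0 := by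
  refine Finsupp.addHom_ext fun σ k => ?_
  rw [AddMonoidHom.comp_apply, AddMonoidHom.zero_apply, SCSet.dE_single, map_zsmul, map_sum]
  simp only [map_zsmul, SCSet.dE_single, one_smul, Finset.smul_sum, ← mul_smul]
  rw [← Finset.sum_product', Finset.univ_product_univ]
  simp only [one_mul, mul_smul]
  rw [← Finset.smul_sum]
  have hk := Xs.key ε n σ
  simp only [mul_smul] at hk
  rw [hk, smul_zero]

-- generic chain-map lemma
lemma SCSet.dE_mapDomain (Y Z : SCSet) (g : ∀ n, Y.X n → Z.X n)
    (hg : ∀ n (i : Fin (n+1)) (ε : Bool) (y : Y.X (n+1)),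
      g n (Y.face n i ε y) = Z.face n i ε (g (n+1) y)) (ε : Bool) (n : ℕ) :
    (Z.dE ε n).comp (Finsupp.mapDomain.addMonoidHom (g (n+1))) =
      (Finsupp.mapDomain.addMonoidHom (g n)).comp (Y.dE ε n) := by
  refine Finsupp.addHom_ext fun σ k => ?_
  rw [AddMonoidHom.comp_apply, AddMonoidHom.comp_apply,
    Finsupp.mapDomain.addMonoidHom_apply, Finsupp.mapDomain_single, SCSet.dE_single,
    SCSet.dE_single, map_zsmul, map_sum]
  congr 1
  refine Finset.sum_congr rfl fun i _ => ?_
  rw [map_zsmul, Finsupp.mapDomain.addMonoidHom_apply, Finsupp.mapDomain_single, hg]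

lemma SCSub.incl_comm {Xs : SCSet} (A : SCSub Xs) (ε : Bool) (n : ℕ) :
    (Xs.dE ε n).comp (A.incl (n+1)) = (A.incl n).comp (A.toSCSet.dE ε n) :=
  SCSet.dE_mapDomain A.toSCSet Xs (fun _ x => x.1) (fun _ _ _ _ => rfl) ε n

lemma SCSub.interInclLeft_comm {Xs : SCSet} (A B : SCSub Xs) (ε : Bool) (n : ℕ) :
    (A.toSCSet.dE ε n).comp (A.interInclLeft B (n+1)) =
      (A.interInclLeft B n).comp ((A.inter B).toSCSet.dE ε n) := by
  refine Finsupp.addHom_ext fun σ k => ?_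
  rw [AddMonoidHom.comp_apply, AddMonoidHom.comp_apply, SCSub.interInclLeft,
    SCSub.interInclLeft]
  erw [Finsupp.mapDomain.addMonoidHom_apply, Finsupp.mapDomain_single]
  erw [SCSet.dE_single, SCSet.dE_single]
  rw [map_zsmul, map_sum]
  congr 1
  refine Finset.sum_congr rfl fun i _ => ?_
  erw [map_zsmul, Finsupp.mapDomain.addMonoidHom_apply, Finsupp.mapDomain_single]
  rfl

lemma SCSub.interInclRight_comm {Xs : SCSet} (A B : SCSub Xs) (ε : Bool) (n : ℕ) :
    (B.toSCSet.dE ε n).comp (A.interInclRight B (n+1)) =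
      (A.interInclRight B n).comp ((A.inter B).toSCSet.dE ε n) := by
  refine Finsupp.addHom_ext fun σ k => ?_
  rw [AddMonoidHom.comp_apply, AddMonoidHom.comp_apply, SCSub.interInclRight,
    SCSub.interInclRight]
  erw [Finsupp.mapDomain.addMonoidHom_apply, Finsupp.mapDomain_single]
  erw [SCSet.dE_single, SCSet.dE_single]
  rw [map_zsmul, map_sum]
  congr 1
  refine Finset.sum_congr rfl fun i _ => ?_
  erw [map_zsmul, Finsupp.mapDomain.addMonoidHom_apply, Finsupp.mapDomain_single]
  rfl

lemma SCSub.inclLeft_inj {Xs : SCSet} (A B : SCSub Xs) (n : ℕ) :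
    Function.Injective
      (fun x : (A.inter B).toSCSet.X n => (⟨x.1, x.2.1⟩ : A.toSCSet.X n)) := by
  intro a b hab
  simp only [Subtype.mk.injEq] at hab
  exact Subtype.ext hab

lemma SCSub.inclRight_inj {Xs : SCSet} (A B : SCSub Xs) (n : ℕ) :
    Function.Injective
      (fun x : (A.inter B).toSCSet.X n => (⟨x.1, x.2.2⟩ : B.toSCSet.X n)) := by
  intro a b hab
  simp only [Subtype.mk.injEq] at hab
  exact Subtype.ext hab

-- injectivity of theta
lemma SCSub.theta_inj {Xs : SCSet} (A B : SCSub Xs) (n : ℕ) :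
    Function.Injective (A.theta B n) := by
  intro x y h
  have h1 : A.interInclLeft B n x = A.interInclLeft B n y := congrArg Prod.fst h
  exact Finsupp.mapDomain_injective (A.inclLeft_inj B n) h1

-- surjectivity of subMap
lemma SCSub.subMap_surj {Xs : SCSet} (A B : SCSub Xs)
    (cover : ∀ n, A.mem n ∪ B.mem n = Set.univ) (n : ℕ) :
    Function.Surjective (A.subMap B n) := by
  classical
  have hmem : ∀ x : Xs.X n, x ∈ A.mem n ∪ B.mem n := by
    intro x; rw [cover n]; trivial
  set s : Xs.X n → A.toSCSet.C n × B.toSCSet.C n := fun x =>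
    if h : x ∈ A.mem n then (Finsupp.single ⟨x, h⟩ 1, 0)
    else (0, -Finsupp.single ⟨x, (hmem x).resolve_left h⟩ 1) with hs
  have key : ∀ x : Xs.X n, A.subMap B n (s x) = Finsupp.single x 1 := by
    intro x
    by_cases h : x ∈ A.mem n
    · simp only [hs, dif_pos h, SCSub.subMap, AddMonoidHom.coprod_apply,
        AddMonoidHom.neg_apply, map_zero, neg_zero, add_zero, SCSub.incl,
        Finsupp.mapDomain.addMonoidHom_apply, Finsupp.mapDomain_single]
      exact Finsupp.mapDomain_single
    · simp only [hs, dif_neg h, SCSub.subMap, AddMonoidHom.coprod_apply,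
        AddMonoidHom.neg_apply, map_zero, map_neg, neg_neg, zero_add, SCSub.incl,
        Finsupp.mapDomain.addMonoidHom_apply, Finsupp.mapDomain_single]
      exact Finsupp.mapDomain_single
  set t : Xs.C n →+ A.toSCSet.C n × B.toSCSet.C n :=
    Finsupp.liftAddHom fun x => zmultiplesHom _ (s x) with ht
  have hsec : (A.subMap B n).comp t = AddMonoidHom.id _ := by
    refine Finsupp.addHom_ext fun x k => ?_
    rw [AddMonoidHom.comp_apply, AddMonoidHom.id_apply, ht,
      Finsupp.liftAddHom_apply_single, zmultiplesHom_apply, map_zsmul, key,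
      Finsupp.smul_single, smul_eq_mul, mul_one]
  intro c
  exact ⟨t c, by rw [← AddMonoidHom.comp_apply, hsec, AddMonoidHom.id_apply]⟩

-- exactness in the middle
lemma SCSub.exact_mid {Xs : SCSet} (A B : SCSub Xs) (n : ℕ) :
    Function.Exact (A.theta B n) (A.subMap B n) := by
  intro p
  constructor
  · intro hp
    have hab : A.incl n p.1 = B.incl n p.2 := by
      refine sub_eq_zero.mp ?_
      simpa [SCSub.subMap, AddMonoidHom.coprod_apply, sub_eq_add_neg] using hp
    set c : (A.inter B).toSCSet.C n :=
      Finsupp.comapDomain (Subtype.val : (A.inter B).toSCSet.X n → Xs.X n)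
        (A.incl n p.1) (Subtype.val_injective.injOn) with hc
    refine ⟨c, ?_⟩
    have hwA : ∀ q : A.toSCSet.X n, (A.incl n p.1) q.1 = p.1 q := fun q =>
      Finsupp.mapDomain_apply Subtype.val_injective p.1 q
    have hwB : ∀ q : B.toSCSet.X n, (A.incl n p.1) q.1 = p.2 q := by
      intro q
      rw [hab]
      exact Finsupp.mapDomain_apply Subtype.val_injective p.2 q
    have hwA0 : ∀ x : Xs.X n, x ∉ A.mem n → (A.incl n p.1) x = 0 := by
      intro x hx
      show Finsupp.mapDomain Subtype.val p.1 x = 0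
      refine Finsupp.mapDomain_notin_range _ _ ?_
      rintro ⟨q, rfl⟩; exact hx q.2
    have hwB0 : ∀ x : Xs.X n, x ∉ B.mem n → (A.incl n p.1) x = 0 := by
      intro x hx
      rw [hab]
      show Finsupp.mapDomain Subtype.val p.2 x = 0
      refine Finsupp.mapDomain_notin_range _ _ ?_
      rintro ⟨q, rfl⟩; exact hx q.2
    have hcval : ∀ x : (A.inter B).toSCSet.X n, c x = (A.incl n p.1) x.1 := fun x =>
      Finsupp.comapDomain_apply _ _ _ _
    refine Prod.ext ?_ ?_
    · show A.interInclLeft B n c = p.1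
      ext q
      by_cases hq : q.1 ∈ B.mem n
      · have h2 := Finsupp.mapDomain_apply (A.inclLeft_inj B n) c
          (a := (⟨q.1, q.2, hq⟩ : (A.inter B).toSCSet.X n))
        show Finsupp.mapDomain _ c q = p.1 q
        exact h2.trans ((hcval _).trans (hwA q))
      · show Finsupp.mapDomain _ c q = p.1 q
        erw [Finsupp.mapDomain_notin_range, ← hwA q, hwB0 q.1 hq]
        rintro ⟨x, rfl⟩
        exact hq x.2.2
    · show A.interInclRight B n c = p.2
      ext q
      by_cases hq : q.1 ∈ A.mem n
      · have h2 := Finsupp.mapDomain_apply (A.inclRight_inj B n) c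
          (a := (⟨q.1, hq, q.2⟩ : (A.inter B).toSCSet.X n))
        show Finsupp.mapDomain _ c q = p.2 q
        exact h2.trans ((hcval _).trans (hwB q))
      · show Finsupp.mapDomain _ c q = p.2 q
        erw [Finsupp.mapDomain_notin_range, ← hwB q, hwA0 q.1 hq]
        rintro ⟨x, rfl⟩
        exact hq x.2.1
  · rintro ⟨c, rfl⟩
    show A.subMap B n (A.theta B n c) = 0
    rw [← AddMonoidHom.comp_apply]
    have hz : (A.subMap B n).comp (A.theta B n) = 0 := by
      refine Finsupp.addHom_ext fun x k => ?_
      simp only [AddMonoidHom.comp_apply, AddMonoidHom.zero_apply, SCSub.theta,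
        AddMonoidHom.prod_apply, SCSub.subMap, AddMonoidHom.coprod_apply,
        AddMonoidHom.neg_apply, SCSub.interInclLeft, SCSub.interInclRight, SCSub.incl,
        Finsupp.mapDomain.addMonoidHom_apply, Finsupp.mapDomain_single]
      rw [add_neg_eq_zero]
      show Finsupp.mapDomain _ (Finsupp.mapDomain _ (Finsupp.single x k)) =
        Finsupp.mapDomain _ (Finsupp.mapDomain _ (Finsupp.single x k))
      erw [Finsupp.mapDomain_single, Finsupp.mapDomain_single, Finsupp.mapDomain_single,
        Finsupp.mapDomain_single]
    rw [hz, AddMonoidHom.zero_apply]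

open CategoryTheory

namespace MVAux

-- transport of exactness along equivs
lemma exact_conj {A B C A' B' C' : Type}
    [AddCommGroup A] [AddCommGroup B] [AddCommGroup C]
    [AddCommGroup A'] [AddCommGroup B'] [AddCommGroup C']
    (eA : A ≃+ A') (eB : B ≃+ B') (eC : C ≃+ C')
    {f : A →+ B} {g : B →+ C} (h : Function.Exact f g) :
    Function.Exact ((eB.toAddMonoidHom.comp f).comp eA.symm.toAddMonoidHom)
      ((eC.toAddMonoidHom.comp g).comp eB.symm.toAddMonoidHom) := by
  intro y
  simp only [AddMonoidHom.comp_apply, AddEquiv.coe_toAddMonoidHom]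
  constructor
  · intro hy
    have h0 : g (eB.symm y) = 0 := by
      have := congrArg eC.symm hy
      simpa using this
    obtain ⟨x, hx⟩ := (h (eB.symm y)).1 h0
    exact ⟨eA x, by simp [hx]⟩
  · rintro ⟨x, rfl⟩
    have : g (f (eA.symm x)) = 0 := h.apply_apply_eq_zero _
    simp [this]
  
-- product splitting of concrete homology
section prodSplit
variable {M M' Mm Mm' P P' : Type}
  [AddCommGroup M] [AddCommGroup M'] [AddCommGroup Mm] [AddCommGroup Mm']
  [AddCommGroup P] [AddCommGroup P']
  (d : Mm →+ M) (d' : Mm' →+ M') (o : M →+ P) (o' : M' →+ P')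

noncomputable def proj1 : (o.prodMap o').ker →+ o.ker :=
  AddMonoidHom.mk' (fun x => ⟨x.1.1, by
    have := x.2
    rw [AddMonoidHom.mem_ker] at this ⊢
    exact congrArg Prod.fst this⟩) (fun a b => Subtype.ext rfl)

noncomputable def proj2 : (o.prodMap o').ker →+ o'.ker :=
  AddMonoidHom.mk' (fun x => ⟨x.1.2, by
    have := x.2
    rw [AddMonoidHom.mem_ker] at this ⊢
    exact congrArg Prod.snd this⟩) (fun a b => Subtype.ext rfl)

noncomputable def prodSplit :
    ((o.prodMap o').ker ⧸ ((d.prodMap d').range.addSubgroupOf (o.prodMap o').ker)) ≃+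
      ((o.ker ⧸ d.range.addSubgroupOf o.ker) × (o'.ker ⧸ d'.range.addSubgroupOf o'.ker)) := by
  have hcond : ∀ x ∈ (d.prodMap d').range.addSubgroupOf (o.prodMap o').ker,
      (((QuotientAddGroup.mk' (d.range.addSubgroupOf o.ker)).comp (proj1 o o')).prod
       ((QuotientAddGroup.mk' (d'.range.addSubgroupOf o'.ker)).comp (proj2 o o'))) x = 0 := by
    intro x hx
    rw [AddSubgroup.mem_addSubgroupOf] at hx
    obtain ⟨⟨a, b⟩, hab⟩ := hx
    have h1 : (x : M × M').1 = d a := (congrArg Prod.fst hab).symm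
    have h2 : (x : M × M').2 = d' b := (congrArg Prod.snd hab).symm
    refine Prod.ext ?_ ?_
    · show QuotientAddGroup.mk' _ (proj1 o o' x) = 0
      rw [QuotientAddGroup.mk'_apply, QuotientAddGroup.eq_zero_iff,
        AddSubgroup.mem_addSubgroupOf]
      exact ⟨a, h1.symm⟩
    · show QuotientAddGroup.mk' _ (proj2 o o' x) = 0
      rw [QuotientAddGroup.mk'_apply, QuotientAddGroup.eq_zero_iff,
        AddSubgroup.mem_addSubgroupOf]
      exact ⟨b, h2.symm⟩
  refine AddEquiv.ofBijective (QuotientAddGroup.lift _ _ (fun x hx => (AddMonoidHom.mem_ker).2 (hcond x hx))) ⟨?_, ?_⟩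
  · rw [injective_iff_map_eq_zero]
    intro q hq
    induction q using QuotientAddGroup.induction_on with
    | H x =>
      rw [QuotientAddGroup.lift_mk'] at hq
      have h1 : QuotientAddGroup.mk' (d.range.addSubgroupOf o.ker) (proj1 o o' x) = 0 :=
        congrArg Prod.fst hq
      have h2 : QuotientAddGroup.mk' (d'.range.addSubgroupOf o'.ker) (proj2 o o' x) = 0 :=
        congrArg Prod.snd hq
      rw [QuotientAddGroup.mk'_apply, QuotientAddGroup.eq_zero_iff,
        AddSubgroup.mem_addSubgroupOf] at h1 h2
      obtain ⟨a, ha⟩ := h1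
      obtain ⟨b, hb⟩ := h2
      rw [QuotientAddGroup.eq_zero_iff, AddSubgroup.mem_addSubgroupOf]
      exact ⟨(a, b), Prod.ext ha hb⟩
  · intro p
    obtain ⟨q1, q2⟩ := p
    induction q1 using QuotientAddGroup.induction_on with
    | H u =>
      induction q2 using QuotientAddGroup.induction_on with
      | H v =>
        refine ⟨QuotientAddGroup.mk ⟨((u : M), (v : M')), ?_⟩, ?_⟩
        · rw [AddMonoidHom.mem_ker]
          exact Prod.ext u.2 v.2
        · rw [QuotientAddGroup.lift_mk]
          refine Prod.ext ?_ ?_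
          · show QuotientAddGroup.mk' _ (proj1 o o' _) = _
            rw [QuotientAddGroup.mk'_apply]
            congr 1
          · show QuotientAddGroup.mk' _ (proj2 o o' _) = _
            rw [QuotientAddGroup.mk'_apply]
            congr 1

end prodSplit

section abstract

variable (Ob : ℕ → Type) [instOb : ∀ n, AddCommGroup (Ob n)]
variable (d : ∀ n, Ob (n+1) →+ Ob n) (o : ∀ n, Ob n →+ Ob (n-1))

lemma toCC_sq (sq : ∀ n, (d n).comp (d (n+1)) = 0) (n : ℕ) :
    AddCommGrpCat.ofHom (d (n+1)) ≫ AddCommGrpCat.ofHom (d n) = 0 := by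
  ext x
  exact DFunLike.congr_fun (sq n) x

/-- The chain complex in `AddCommGrpCat` determined by the data. -/
noncomputable def toCC (sq : ∀ n, (d n).comp (d (n+1)) = 0) : ChainComplex AddCommGrpCat ℕ :=
  ChainComplex.of (fun n => AddCommGrpCat.of (Ob n)) (fun n => AddCommGrpCat.ofHom (d n))
    (toCC_sq Ob d sq)

/-- The explicit short complex at degree `n`. -/
noncomputable def myS (ho : ∀ n, o (n+1) = d n) (hz : o 0 = 0)
    (sq : ∀ n, (d n).comp (d (n+1)) = 0) (n : ℕ) :
    ShortComplex AddCommGrpCat :=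
  ShortComplex.mk (AddCommGrpCat.ofHom (d n)) (AddCommGrpCat.ofHom (o n))
    (by
      ext x
      show (o n) ((d n) x) = 0
      cases n with
      | zero =>
        rw [hz]; rfl
      | succ m =>
        rw [ho m]
        exact DFunLike.congr_fun (sq m) x)

variable (ho : ∀ n, o (n+1) = d n) (hz : o 0 = 0) (sq : ∀ n, (d n).comp (d (n+1)) = 0)

/-- The `sc'` of the chain complex agrees with the explicit short complex. -/
noncomputable def isoSc (n : ℕ) :
    (toCC Ob d sq).sc' (n+1) n (n-1) ≅ myS Ob d o ho hz sq n :=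
  ShortComplex.isoMk (Iso.refl ((toCC Ob d sq).X (n+1))) (Iso.refl ((toCC Ob d sq).X n))
    (Iso.refl ((toCC Ob d sq).X (n-1)))
    (by
      dsimp only [toCC, myS, HomologicalComplex.sc', HomologicalComplex.shortComplexFunctor', Iso.refl_hom]
      rw [Category.id_comp, Category.comp_id, ChainComplex.of_d])
    (by
      dsimp only [toCC, myS, HomologicalComplex.sc', HomologicalComplex.shortComplexFunctor', Iso.refl_hom]
      rw [Category.id_comp, Category.comp_id]
      cases n with
      | zero =>
        rw [ChainComplex.of_d_ne _ _ (show (0:ℕ) ≠ 0 + 1 by omega), hz]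
        ext x
        rfl
      | succ m =>
        rw [ho m]
        exact (ChainComplex.of_d (fun n => AddCommGrpCat.of (Ob n))
          (fun n => AddCommGrpCat.ofHom (d n)) m).symm)

/-- Identification of the mathlib homology with the concrete quotient. -/
noncomputable def homologyEquiv (n : ℕ) :
    ((toCC Ob d sq).homology n) ≃+
      ((o n).ker ⧸ (d n).range.addSubgroupOf (o n).ker) := by
  refine AddEquiv.trans
    (CategoryTheory.Iso.addCommGroupIsoToAddEquiv
      (((toCC Ob d sq).homologyIsoSc' (n+1) n (n-1) (by rw [ChainComplex.prev])
        (by cases n with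
          | zero => exact ChainComplex.next_nat_zero
          | succ m => exact ChainComplex.next_nat_succ m)) ≪≫
        ShortComplex.homologyMapIso (isoSc Ob d o ho hz sq n) ≪≫
        (myS Ob d o ho hz sq n).abHomologyIso))
    (@QuotientAddGroup.quotientAddEquivOfEq _ _ _ _ (AddSubgroup.normal_of_isAddCommutative _)
      (AddSubgroup.normal_of_isAddCommutative _) ?_)
  ext x
  erw [AddSubgroup.mem_addSubgroupOf]
  rw [AddMonoidHom.mem_range, AddMonoidHom.mem_range]
  constructor
  · rintro ⟨y, rfl⟩
    exact ⟨y, rfl⟩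
  · rintro ⟨y, hy⟩
    exact ⟨y, Subtype.ext hy⟩

end abstract

section main

variable (Ob₁ Ob₂ Ob₃ : ℕ → Type)
  [∀ n, AddCommGroup (Ob₁ n)] [∀ n, AddCommGroup (Ob₂ n)] [∀ n, AddCommGroup (Ob₃ n)]

theorem abstractLES
    (d₁ : ∀ n, Ob₁ (n+1) →+ Ob₁ n) (o₁ : ∀ n, Ob₁ n →+ Ob₁ (n-1))
    (d₂ : ∀ n, Ob₂ (n+1) →+ Ob₂ n) (o₂ : ∀ n, Ob₂ n →+ Ob₂ (n-1))
    (d₃ : ∀ n, Ob₃ (n+1) →+ Ob₃ n) (o₃ : ∀ n, Ob₃ n →+ Ob₃ (n-1))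
    (ho₁ : ∀ n, o₁ (n+1) = d₁ n) (hz₁ : o₁ 0 = 0) (sq₁ : ∀ n, (d₁ n).comp (d₁ (n+1)) = 0)
    (ho₂ : ∀ n, o₂ (n+1) = d₂ n) (hz₂ : o₂ 0 = 0) (sq₂ : ∀ n, (d₂ n).comp (d₂ (n+1)) = 0)
    (ho₃ : ∀ n, o₃ (n+1) = d₃ n) (hz₃ : o₃ 0 = 0) (sq₃ : ∀ n, (d₃ n).comp (d₃ (n+1)) = 0)
    (f : ∀ n, Ob₁ n →+ Ob₂ n) (g : ∀ n, Ob₂ n →+ Ob₃ n)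
    (hfc : ∀ n, (f n).comp (d₁ n) = (d₂ n).comp (f (n+1)))
    (hgc : ∀ n, (g n).comp (d₂ n) = (d₃ n).comp (g (n+1)))
    (hfinj : ∀ n, Function.Injective (f n))
    (hgsurj : ∀ n, Function.Surjective (g n))
    (hex : ∀ n, Function.Exact (f n) (g n)) :
    ∃ (α : ∀ n, ((o₁ n).ker ⧸ (d₁ n).range.addSubgroupOf (o₁ n).ker) →+
          ((o₂ n).ker ⧸ (d₂ n).range.addSubgroupOf (o₂ n).ker))
      (β : ∀ n, ((o₂ n).ker ⧸ (d₂ n).range.addSubgroupOf (o₂ n).ker) →+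
          ((o₃ n).ker ⧸ (d₃ n).range.addSubgroupOf (o₃ n).ker))
      (δ : ∀ n, ((o₃ (n+1)).ker ⧸ (d₃ (n+1)).range.addSubgroupOf (o₃ (n+1)).ker) →+
          ((o₁ n).ker ⧸ (d₁ n).range.addSubgroupOf (o₁ n).ker)),
      Function.Surjective (β 0) ∧
      (∀ n, Function.Exact (α n) (β n)) ∧
      (∀ n, Function.Exact (β (n+1)) (δ n)) ∧
      (∀ n, Function.Exact (δ n) (α n)) := by
  classical
  set K₁ := toCC Ob₁ d₁ sq₁ with hK₁
  set K₂ := toCC Ob₂ d₂ sq₂ with hK₂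
  set K₃ := toCC Ob₃ d₃ sq₃ with hK₃
  -- chain maps
  set Θ : K₁ ⟶ K₂ := ChainComplex.ofHom
    (fun n => AddCommGrpCat.ofHom (f n))
    (fun n => by
      show AddCommGrpCat.ofHom (f (n+1)) ≫ ChainComplex.of.d (fun n => AddCommGrpCat.of (Ob₂ n)) (fun n => AddCommGrpCat.ofHom (d₂ n)) (n+1) n =
        ChainComplex.of.d (fun n => AddCommGrpCat.of (Ob₁ n)) (fun n => AddCommGrpCat.ofHom (d₁ n)) (n+1) n ≫ AddCommGrpCat.ofHom (f n)
      rw [ChainComplex.of_d, ChainComplex.of_d]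
      ext x
      exact (DFunLike.congr_fun (hfc n) x).symm) with hΘ
  set Φ : K₂ ⟶ K₃ := ChainComplex.ofHom
    (fun n => AddCommGrpCat.ofHom (g n))
    (fun n => by
      show AddCommGrpCat.ofHom (g (n+1)) ≫ ChainComplex.of.d (fun n => AddCommGrpCat.of (Ob₃ n)) (fun n => AddCommGrpCat.ofHom (d₃ n)) (n+1) n =
        ChainComplex.of.d (fun n => AddCommGrpCat.of (Ob₂ n)) (fun n => AddCommGrpCat.ofHom (d₂ n)) (n+1) n ≫ AddCommGrpCat.ofHom (g n)
      rw [ChainComplex.of_d, ChainComplex.of_d]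
      ext x
      exact (DFunLike.congr_fun (hgc n) x).symm) with hΦ
  set S : ShortComplex (HomologicalComplex AddCommGrpCat (ComplexShape.down ℕ)) :=
    ShortComplex.mk Θ Φ (by
      ext n x
      exact (hex n).apply_apply_eq_zero x) with hS0
  have hS : S.ShortExact := by
    apply HomologicalComplex.shortExact_of_degreewise_shortExact
    intro n
    refine ShortComplex.ShortExact.mk' ?_ ?_ ?_
    · exact (ShortComplex.ab_exact_iff_function_exact _).2 (hex n)
    · exact (AddCommGrpCat.mono_iff_injective _).2 (hfinj n)
    · exact (AddCommGrpCat.epi_iff_surjective _).2 (hgsurj n)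
  -- homology equivalences
  set E₁ := fun n => homologyEquiv Ob₁ d₁ o₁ ho₁ hz₁ sq₁ n with hE₁
  set E₂ := fun n => homologyEquiv Ob₂ d₂ o₂ ho₂ hz₂ sq₂ n with hE₂
  set E₃ := fun n => homologyEquiv Ob₃ d₃ o₃ ho₃ hz₃ sq₃ n with hE₃
  refine ⟨fun n => ((E₂ n).toAddMonoidHom.comp
      (HomologicalComplex.homologyMap S.f n).hom).comp (E₁ n).symm.toAddMonoidHom,
    fun n => ((E₃ n).toAddMonoidHom.comp
      (HomologicalComplex.homologyMap S.g n).hom).comp (E₂ n).symm.toAddMonoidHom,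
    fun n => ((E₁ n).toAddMonoidHom.comp
      (hS.δ (n+1) n rfl).hom).comp (E₃ (n+1)).symm.toAddMonoidHom,
    ?_, ?_, ?_, ?_⟩
  · -- surjectivity of β 0
    have h2 : IsIso (K₂.iCycles 0) := K₂.isIso_iCycles 0 0 ChainComplex.next_nat_zero
      (K₂.shape 0 0 (by simp [ComplexShape.down_Rel]))
    have h3 : IsIso (K₃.iCycles 0) := K₃.isIso_iCycles 0 0 ChainComplex.next_nat_zero
      (K₃.shape 0 0 (by simp [ComplexShape.down_Rel]))
    have hepi : Epi (S.g.f 0) := (AddCommGrpCat.epi_iff_surjective _).2 (hgsurj 0)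
    have hfac : HomologicalComplex.cyclesMap S.g 0 =
        K₂.iCycles 0 ≫ S.g.f 0 ≫ CategoryTheory.inv (K₃.iCycles 0) := by
      rw [← cancel_mono (K₃.iCycles 0)]
      simp [HomologicalComplex.cyclesMap_i]
      exact HomologicalComplex.cyclesMap_i S.g 0
    have hcyc : Epi (HomologicalComplex.cyclesMap S.g 0) := by
      rw [hfac]
      infer_instance
    have hnat := HomologicalComplex.homologyπ_naturality S.g 0
    have hepi2 : Epi (HomologicalComplex.cyclesMap S.g 0 ≫ K₃.homologyπ 0) := epi_comp _ _
    rw [← hnat] at hepi2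
    have hepi3 : Epi (HomologicalComplex.homologyMap S.g 0) := epi_of_epi (K₂.homologyπ 0) _
    have hsurj3 : Function.Surjective (HomologicalComplex.homologyMap S.g 0) :=
      (AddCommGrpCat.epi_iff_surjective _).1 hepi3
    exact (E₃ 0).surjective.comp (hsurj3.comp (E₂ 0).symm.surjective)
  · intro n
    exact exact_conj (E₁ n) (E₂ n) (E₃ n)
      ((ShortComplex.ab_exact_iff_function_exact _).1 (hS.homology_exact₂ n))
  · intro n
    exact exact_conj (E₂ (n+1)) (E₃ (n+1)) (E₁ n)
      ((ShortComplex.ab_exact_iff_function_exact _).1 (hS.homology_exact₃ (n+1) n rfl))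
  · intro n
    exact exact_conj (E₃ (n+1)) (E₁ n) (E₂ n)
      ((ShortComplex.ab_exact_iff_function_exact _).1 (hS.homology_exact₁ (n+1) n rfl))

end main

section transport
variable {A B B' C : Type} [AddCommGroup A] [AddCommGroup B] [AddCommGroup B'] [AddCommGroup C]

lemma exact_conj_mid (eB : B ≃+ B') (f : A →+ B) (g : B →+ C) (h : Function.Exact f g) :
    Function.Exact (eB.toAddMonoidHom.comp f) (g.comp eB.symm.toAddMonoidHom) := by
  intro y
  simp only [AddMonoidHom.comp_apply, AddEquiv.coe_toAddMonoidHom]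
  rw [h (eB.symm y)]
  constructor
  · rintro ⟨x, hx⟩
    refine ⟨x, ?_⟩
    simp only [AddMonoidHom.comp_apply, AddEquiv.coe_toAddMonoidHom, hx]
    simp
  · rintro ⟨x, rfl⟩
    exact ⟨x, by simp⟩

lemma exact_precomp_surj {s : A →+ B} (hs : Function.Surjective s)
    {f : B →+ B'} {g : B' →+ C} (h : Function.Exact f g) :
    Function.Exact (f.comp s) g := by
  intro y
  rw [h y]
  constructor
  · rintro ⟨x, hx⟩
    obtain ⟨a, rfl⟩ := hs x
    exact ⟨a, hx⟩
  · rintro ⟨a, rfl⟩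
    exact ⟨s a, rfl⟩

lemma exact_postcomp_inj {i : B' →+ C} (hi : Function.Injective i)
    {f : A →+ B} {g : B →+ B'} (h : Function.Exact f g) :
    Function.Exact f (i.comp g) := by
  intro y
  rw [← h y, AddMonoidHom.comp_apply]
  constructor
  · intro hy
    exact hi (by simpa using hy)
  · intro hy
    rw [hy, map_zero]

end transport

end MVAux

/-- Mayer–Vietoris for the Goubault (directed) homology of semicubical sets: if
`X = X₁ ∪ X₂` is a union of semicubical subsets then for each `ε ∈ {0,1}` there is a long
exact sequence
`⋯ → H_n^ε(X₁ ∩ X₂) → H_n^ε(X₁) ⊕ H_n^ε(X₂) → H_n^ε(X) → H_{n-1}^ε(X₁ ∩ X₂) → ⋯`. -/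

theorem semicubical_mayer_vietoris_goubault (Xs : SCSet) (A B : SCSub Xs)
    (cover : ∀ n, A.mem n ∪ B.mem n = Set.univ) (ε : Bool) :
    ∃ (α : ∀ n, (A.inter B).toSCSet.HE ε n →+ A.toSCSet.HE ε n × B.toSCSet.HE ε n)
      (β : ∀ n, A.toSCSet.HE ε n × B.toSCSet.HE ε n →+ Xs.HE ε n)
      (δ : ∀ n, Xs.HE ε (n + 1) →+ (A.inter B).toSCSet.HE ε n),
        Function.Surjective (β 0) ∧
        (∀ n, Function.Exact (α n) (β n)) ∧
        (∀ n, Function.Exact (β (n + 1)) (δ n)) ∧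
        (∀ n, Function.Exact (δ n) (α n)) := by
  classical
  -- properties of the product complex
  have hz₂ : (A.toSCSet.dEOut ε 0).prodMap (B.toSCSet.dEOut ε 0) = 0 :=
    AddMonoidHom.ext fun x => rfl
  have sq₂ : ∀ n, ((A.toSCSet.dE ε n).prodMap (B.toSCSet.dE ε n)).comp
      ((A.toSCSet.dE ε (n+1)).prodMap (B.toSCSet.dE ε (n+1))) = 0 := fun n =>
    AddMonoidHom.ext fun x => Prod.ext
      (DFunLike.congr_fun (A.toSCSet.dE_comp ε n) x.1)
      (DFunLike.congr_fun (B.toSCSet.dE_comp ε n) x.2)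
  have hfc : ∀ n, (A.theta B n).comp ((A.inter B).toSCSet.dE ε n) =
      ((A.toSCSet.dE ε n).prodMap (B.toSCSet.dE ε n)).comp (A.theta B (n+1)) := by
    intro n
    refine AddMonoidHom.ext fun x => Prod.ext ?_ ?_
    · exact (DFunLike.congr_fun (A.interInclLeft_comm B ε n) x).symm
    · exact (DFunLike.congr_fun (A.interInclRight_comm B ε n) x).symm
  have hgc : ∀ n, (A.subMap B n).comp ((A.toSCSet.dE ε n).prodMap (B.toSCSet.dE ε n)) =
      (Xs.dE ε n).comp (A.subMap B (n+1)) := by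
    intro n
    refine AddMonoidHom.ext fun x => ?_
    show A.incl n (A.toSCSet.dE ε n x.1) + (-(B.incl n)) (B.toSCSet.dE ε n x.2)
        = Xs.dE ε n (A.incl (n+1) x.1 + (-(B.incl (n+1))) x.2)
    rw [AddMonoidHom.neg_apply, AddMonoidHom.neg_apply, map_add, map_neg]
    rw [show Xs.dE ε n (A.incl (n+1) x.1) = A.incl n (A.toSCSet.dE ε n x.1) from
      DFunLike.congr_fun (A.incl_comm ε n) x.1]
    rw [show Xs.dE ε n (B.incl (n+1) x.2) = B.incl n (B.toSCSet.dE ε n x.2) from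
      DFunLike.congr_fun (B.incl_comm ε n) x.2]
  obtain ⟨α', β', δ', hsur, hexmid, hexdelta, hexalpha⟩ :=
    MVAux.abstractLES ((A.inter B).toSCSet.C)
      (fun n => A.toSCSet.C n × B.toSCSet.C n) (Xs.C)
      ((A.inter B).toSCSet.dE ε) ((A.inter B).toSCSet.dEOut ε)
      (fun n => (A.toSCSet.dE ε n).prodMap (B.toSCSet.dE ε n))
      (fun n => (A.toSCSet.dEOut ε n).prodMap (B.toSCSet.dEOut ε n))
      (Xs.dE ε) (Xs.dEOut ε)
      (fun n => rfl) rfl ((A.inter B).toSCSet.dE_comp ε)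
      (fun n => rfl) hz₂ sq₂
      (fun n => rfl) rfl (Xs.dE_comp ε)
      (A.theta B) (A.subMap B) hfc hgc
      (A.theta_inj B) (A.subMap_surj B cover) (A.exact_mid B)
  set e : ∀ n, _ ≃+ (A.toSCSet.HE ε n × B.toSCSet.HE ε n) := fun n =>
    MVAux.prodSplit (A.toSCSet.dE ε n) (B.toSCSet.dE ε n)
      (A.toSCSet.dEOut ε n) (B.toSCSet.dEOut ε n) with he
  refine ⟨fun n => (e n).toAddMonoidHom.comp (α' n),
    fun n => (β' n).comp (e n).symm.toAddMonoidHom, δ', ?_, ?_, ?_, ?_⟩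
  · exact (hsur.comp (e 0).symm.surjective)
  · intro n
    exact MVAux.exact_conj_mid (e n) (α' n) (β' n) (hexmid n)
  · intro n
    exact MVAux.exact_precomp_surj (e (n+1)).symm.surjective (hexdelta n)
  · intro n
    exact MVAux.exact_postcomp_inj (e n).injective (hexalpha n)
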